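/- arXiv:2106.15234 — 4 statements merged into one kernel-verified Lean document; each statement's English description precedes it below -/
import Mathlib

section
/- The graph S produced by the naive greedy spanner algorithm on a finite point set V in a metric space with stretch parameter t > 1 is a t-spanner of the complete graph on V: for every pair of points P, Q ∈ V, the shortest-path distance in S between P and Q is at most t times the metric distance between P and Q. -/
open Classical

noncomputable section

/-- The length of a path given as a list of points: the sum of the metric
distances of consecutive points. -/
def chainLength {X : Type*} [PseudoMetricSpace X] : List X → ℝ
  | [] => 0
  | [_] => 0
  | a :: b :: rest => dist a b + chainLength (b :: rest)

/-- `p` is a path from `u` to `v` using only (undirected) edges from `E`. -/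
def IsPathIn {X : Type*} (E : Set (X × X)) (p : List X) (u v : X) : Prop :=
  p ≠ [] ∧ p.head? = some u ∧ p.getLast? = some v ∧
    p.Chain' (fun a b => (a, b) ∈ E ∨ (b, a) ∈ E)

/-- One step of the naive greedy spanner algorithm: add the pair `e` as an edge
unless a path of length at most `t · dist e.1 e.2` already exists. -/
def greedyStep {X : Type*} [PseudoMetricSpace X] (t : ℝ)
    (S : Finset (X × X)) (e : X × X) : Finset (X × X) :=
  if ∃ p : List X, IsPathIn (↑S) p e.1 e.2 ∧ chainLength p ≤ t * dist e.1 e.2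
  then S else insert e S

/-- The naive greedy spanner algorithm run over a list of pairs. -/
def naiveGreedy {X : Type*} [PseudoMetricSpace X] (t : ℝ) (l : List (X × X)) :
    Finset (X × X) :=
  l.foldl (greedyStep t) ∅


lemma subset_greedyStep {X : Type*} [PseudoMetricSpace X] (t : ℝ)
    (S : Finset (X × X)) (e : X × X) : S ⊆ greedyStep t S e := by
  unfold greedyStep; split
  · exact Finset.Subset.refl S
  · exact Finset.subset_insert e S

lemma subset_foldl {X : Type*} [PseudoMetricSpace X] (t : ℝ) :
    ∀ (l : List (X × X)) (S : Finset (X × X)), S ⊆ l.foldl (greedyStep t) S := by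
  intro l
  induction l with
  | nil => intro S; simp
  | cons e l ih => intro S; exact (subset_greedyStep t S e).trans (ih _)

lemma IsPathIn.mono {X : Type*} {E E' : Set (X × X)} (h : E ⊆ E') {p : List X} {u v : X}
    (hp : IsPathIn E p u v) : IsPathIn E' p u v := by
  obtain ⟨h1, h2, h3, h4⟩ := hp
  exact ⟨h1, h2, h3, h4.imp fun a b hab => hab.imp (fun x => h x) (fun x => h x)⟩

lemma chainLength_append {X : Type*} [PseudoMetricSpace X] :
    ∀ (p : List X) (a : X) (q : List X),
      chainLength (p ++ a :: q) = chainLength (p ++ [a]) + chainLength (a :: q)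
  | [], a, q => by simp [chainLength]
  | [x], a, q => by simp [chainLength]
  | x :: y :: p, a, q => by
    have := chainLength_append (y :: p) a q
    simp only [List.cons_append, chainLength, List.append_eq] at *
    rw [this]; ring

lemma chainLength_reverse {X : Type*} [PseudoMetricSpace X] :
    ∀ p : List X, chainLength p.reverse = chainLength p
  | [] => rfl
  | [a] => rfl
  | a :: b :: p => by
    have h1 : (a :: b :: p).reverse = p.reverse ++ b :: [a] := by simp
    rw [h1, chainLength_append, show p.reverse ++ [b] = (b :: p).reverse by simp,
      chainLength_reverse (b :: p)]
    simp [chainLength, dist_comm]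
    ring

lemma IsPathIn.reverse {X : Type*} {E : Set (X × X)} {p : List X} {u v : X}
    (hp : IsPathIn E p u v) : IsPathIn E p.reverse v u := by
  obtain ⟨h1, h2, h3, h4⟩ := hp
  refine ⟨by simpa using h1, by simpa using h3, by simpa using h2, ?_⟩
  show List.IsChain _ p.reverse
  rw [List.isChain_reverse]
  exact h4.imp fun a b hab => hab.symm

lemma greedy_pair {X : Type*} [MetricSpace X] {t : ℝ} (ht : 1 ≤ t) :
    ∀ (l : List (X × X)) (S : Finset (X × X)) (e : X × X), e ∈ l →
      ∃ p : List X, IsPathIn (↑(l.foldl (greedyStep t) S)) p e.1 e.2 ∧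
        chainLength p ≤ t * dist e.1 e.2 := by
  intro l
  induction l with
  | nil => intro S e he; simp at he
  | cons f l ih =>
    intro S e he
    rcases List.mem_cons.mp he with rfl | he
    · simp only [List.foldl_cons]
      have hsub : (greedyStep t S e : Set (X × X)) ⊆
          ↑(l.foldl (greedyStep t) (greedyStep t S e)) := by
        exact_mod_cast subset_foldl t l (greedyStep t S e)
      by_cases h : ∃ p : List X, IsPathIn (↑S) p e.1 e.2 ∧ chainLength p ≤ t * dist e.1 e.2
      · obtain ⟨p, hp, hlen⟩ := h
        have hS : (S : Set (X × X)) ⊆ ↑(greedyStep t S e) := by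
          exact_mod_cast subset_greedyStep t S e
        exact ⟨p, hp.mono (hS.trans hsub), hlen⟩
      · refine ⟨[e.1, e.2], IsPathIn.mono hsub ⟨by simp, by simp, by simp, ?_⟩, ?_⟩
        · refine List.isChain_cons_cons.mpr ⟨Or.inl ?_, List.isChain_singleton _⟩
          simp [greedyStep, h]
        · have : chainLength [e.1, e.2] = dist e.1 e.2 := by simp [chainLength]
          rw [this]
          nlinarith [dist_nonneg (x := e.1) (y := e.2)]
    · simp only [List.foldl_cons]
      exact ih (greedyStep t S f) e he

/-- The output of the naive greedy algorithm, run with parameter `t > 1` over all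
pairs of distinct points of a finite set `V` in nondecreasing order of distance,
is a `t`-spanner of the complete graph on `V`: every pair `P, Q ∈ V` is joined in
it by a path of length at most `t · dist P Q`. -/
theorem naive_greedy_is_spanner {X : Type*} [MetricSpace X] {t : ℝ} (ht : 1 < t)
    (V : Finset X) (l : List (X × X))
    (hmem : ∀ e ∈ l, e.1 ∈ V ∧ e.2 ∈ V ∧ e.1 ≠ e.2)
    (hsort : List.Pairwise (fun a b => dist a.1 a.2 ≤ dist b.1 b.2) l)
    (hcomp : ∀ P ∈ V, ∀ Q ∈ V, P ≠ Q → (P, Q) ∈ l ∨ (Q, P) ∈ l) :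
    ∀ P ∈ V, ∀ Q ∈ V, ∃ p : List X,
      IsPathIn (↑(naiveGreedy t l)) p P Q ∧ chainLength p ≤ t * dist P Q := by
  intro P hP Q hQ
  by_cases hPQ : P = Q
  · subst hPQ
    refine ⟨[P], ⟨by simp, rfl, rfl, List.isChain_singleton _⟩, ?_⟩
    simp [chainLength]
  · rcases hcomp P hP Q hQ hPQ with h | h
    · exact greedy_pair ht.le l ∅ (P, Q) h
    · obtain ⟨p, hp, hlen⟩ := greedy_pair ht.le l ∅ (Q, P) h
      refine ⟨p.reverse, hp.reverse, ?_⟩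
      rw [chainLength_reverse, dist_comm P Q]
      exact hlen

end
end

section
/- Let G be a connected weighted graph on a finite point set in a metric space, let N ⊆ V(G) be a subset of vertices, and let T be a minimum-weight Steiner tree in G connecting the required vertices N (possibly using other vertices of G as optional Steiner points). Then the weight of a minimum spanning tree of the complete metric graph on N is at most 2 times the weight of T. -/
open Classical

noncomputable section

/-- The total weight of a finite edge set, where each edge is weighted by the
metric distance between its endpoints. -/
def edgeWeight {X : Type*} [PseudoMetricSpace X] (E : Finset (X × X)) : ℝ :=
  ∑ e ∈ E, dist e.1 e.2

/-- The edge set `E` connects every pair of points of `N`. -/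
def ConnectsIn {X : Type*} (E : Set (X × X)) (N : Set X) : Prop :=
  ∀ u ∈ N, ∀ v ∈ N, ∃ p : List X, IsPathIn E p u v

/-- The weight of a minimum spanning tree of the complete metric graph on the
finite point set `N` (the infimum of the weights of connected spanning
subgraphs of the complete graph on `N`, which is attained by an MST). -/
def mstWeight {X : Type*} [PseudoMetricSpace X] (N : Finset X) : ℝ :=
  sInf { c | ∃ E : Finset (X × X), (∀ e ∈ E, e.1 ∈ N ∧ e.2 ∈ N) ∧
    ConnectsIn (↑E : Set (X × X)) (↑N : Set X) ∧ c = edgeWeight E }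

namespace SteinerAux

variable {X : Type*}

/-- symmetric edge relation -/
def edgeRel (E : Set (X × X)) (a b : X) : Prop := (a, b) ∈ E ∨ (b, a) ∈ E

theorem edgeRel.symm {E : Set (X × X)} {a b : X} (h : edgeRel E a b) : edgeRel E b a := Or.symm h

def Reach (E : Set (X × X)) (u v : X) : Prop := ∃ p, IsPathIn E p u v

theorem Reach.refl (E : Set (X × X)) (u : X) : Reach E u u :=
  ⟨[u], by simp [IsPathIn, List.Chain', List.isChain_singleton]⟩

theorem reach_of_edgeRel {E : Set (X × X)} {u v : X} (h : edgeRel E u v) : Reach E u v :=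
  ⟨[u, v], by simp [IsPathIn, List.Chain', List.isChain_pair]; exact h⟩

theorem exists_cons_of_head? {p : List X} {u : X} (h : p.head? = some u) :
    ∃ p₀, p = u :: p₀ := by
  cases p with
  | nil => simp at h
  | cons a t => simp at h; exact ⟨t, by rw [h]⟩

theorem Reach.trans {E : Set (X × X)} {u v w : X} (h1 : Reach E u v) (h2 : Reach E v w) :
    Reach E u w := by
  obtain ⟨p, hpne, hph, hpl, hpc⟩ := h1
  obtain ⟨q, hqne, hqh, hql, hqc⟩ := h2
  obtain ⟨q₀, rfl⟩ := exists_cons_of_head? hqh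
  cases q₀ with
  | nil =>
    obtain rfl : v = w := by simpa using hql
    exact ⟨p, hpne, hph, hpl, hpc⟩
  | cons y r =>
    refine ⟨p ++ y :: r, by simp [hpne], ?_, ?_, ?_⟩
    · obtain ⟨p₀, rfl⟩ := exists_cons_of_head? hph
      simp
    · rw [List.getLast?_append_cons]
      simpa using hql
    · refine List.IsChain.append hpc hqc.tail ?_
      intro x hx y' hy'
      rw [hpl] at hx; simp at hx; subst hx
      simp at hy'; subst hy'
      exact (List.isChain_cons_cons.mp hqc).1

theorem Reach.symm {E : Set (X × X)} {u v : X} (h : Reach E u v) : Reach E v u := by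
  obtain ⟨p, hne, hh, hl, hc⟩ := h
  refine ⟨p.reverse, by simp [hne], by simp [hl], by simp [hh], ?_⟩
  simp only [List.Chain']
  rw [List.isChain_reverse]
  exact hc.imp (fun {a b} h => Or.symm h)

theorem reach_mono {E F : Set (X × X)} (hEF : E ⊆ F) {u v : X} (h : Reach E u v) :
    Reach F u v := by
  obtain ⟨p, hne, hh, hl, hc⟩ := h
  exact ⟨p, hne, hh, hl, hc.imp (fun {a b} h => h.imp (fun h' => hEF h') (fun h' => hEF h'))⟩

/-- from the head of a chain, every member is reachable -/
theorem reach_of_chain {E : Set (X × X)} :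
    ∀ (t : List X) (h : X), (h :: t).Chain' (edgeRel E) → ∀ x ∈ h :: t, Reach E h x := by
  intro t
  induction t with
  | nil => intro h _ x hx; simp at hx; subst hx; exact Reach.refl E x
  | cons z t' ih =>
    intro h hc x hx
    rcases List.mem_cons.mp hx with rfl | hx'
    · exact Reach.refl E x
    · have h1 : edgeRel E h z := (List.isChain_cons_cons.mp hc).1
      have h2 := ih z (List.isChain_cons_cons.mp hc).2 x hx'
      exact (reach_of_edgeRel h1).trans h2

theorem chain'_mono_mem {R S : X → X → Prop} :
    ∀ l : List X, (∀ a ∈ l, ∀ b ∈ l, R a b → S a b) → l.Chain' R → l.Chain' S := by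
  intro l
  induction l with
  | nil => intro _ _; exact List.isChain_nil
  | cons a t ih =>
    intro h hc
    simp only [List.Chain'] at hc ⊢
    rw [List.isChain_cons] at hc ⊢
    refine ⟨fun y hy => h a (by simp) y (by cases t <;> simp_all) (hc.1 y hy), ?_⟩
    exact ih (fun x hx y hy => h x (by simp [hx]) y (by simp [hy])) hc.2


section Metric

variable {X : Type*} [MetricSpace X]

theorem chainLength_nonneg : ∀ l : List X, 0 ≤ chainLength l
  | [] => le_refl 0
  | [_] => le_refl 0
  | a :: b :: t => by
      rw [chainLength]
      exact add_nonneg dist_nonneg (chainLength_nonneg (b :: t))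

theorem chainLength_le_cons (x a : X) (l : List X) :
    chainLength (x :: l) ≤ dist x a + chainLength (a :: l) := by
  cases l with
  | nil => simpa [chainLength] using dist_nonneg
  | cons h t =>
    rw [chainLength, chainLength]
    have := dist_triangle x a h
    linarith

theorem chainLength_cons_le_cons {l₁ l₂ : List X} (h : l₁.Sublist l₂) :
    ∀ x : X, chainLength (x :: l₁) ≤ chainLength (x :: l₂) := by
  induction h with
  | slnil => intro x; exact le_refl _
  | cons a h ih =>
    intro x
    exact le_trans (ih x) (chainLength_le_cons x a _)
  | cons_cons a h ih =>
    intro x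
    rw [chainLength, chainLength]
    exact add_le_add le_rfl (ih a)

theorem chainLength_tail_le (a : X) (l : List X) :
    chainLength l ≤ chainLength (a :: l) := by
  cases l with
  | nil => simp [chainLength]
  | cons h t =>
    rw [chainLength]
    have := chainLength_nonneg (h :: t)
    have := (dist_nonneg : (0:ℝ) ≤ dist a h)
    linarith

theorem chainLength_mono {l₁ l₂ : List X} (h : l₁.Sublist l₂) :
    chainLength l₁ ≤ chainLength l₂ := by
  induction h with
  | slnil => exact le_refl _
  | cons a h ih => exact le_trans ih (chainLength_tail_le a _)
  | cons_cons a h ih => exact chainLength_cons_le_cons h a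

theorem chainLength_cons_cons (a b : X) (t : List X) :
    chainLength (a :: b :: t) = dist a b + chainLength (b :: t) := rfl

theorem chainLength_append_cons :
    ∀ (xs : List X) (a : X) (ys : List X),
      chainLength (xs ++ a :: ys) = chainLength (xs ++ [a]) + chainLength (a :: ys)
  | [], a, ys => by cases ys <;> simp [chainLength]
  | [x], a, ys => by cases ys <;> simp [chainLength] <;> ring
  | x :: y :: xs, a, ys => by
      have h := chainLength_append_cons (y :: xs) a ys
      simp only [List.cons_append] at h ⊢
      rw [chainLength_cons_cons, chainLength_cons_cons, h]
      ring

theorem chainLength_concat :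
    ∀ (p : List X) (l a : X), p.getLast? = some l →
      chainLength (p ++ [a]) = chainLength p + dist l a
  | [], l, a => by intro h; simp at h
  | [x], l, a => by
      intro h
      simp at h; subst h
      simp [chainLength]
  | x :: y :: t, l, a => by
      intro h
      rw [List.getLast?_cons_cons] at h
      have h2 := chainLength_concat (y :: t) l a h
      simp only [List.cons_append] at h2 ⊢
      rw [chainLength_cons_cons, chainLength_cons_cons, h2]
      ring

theorem edgeWeight_nonneg (E : Finset (X × X)) : 0 ≤ edgeWeight E :=
  Finset.sum_nonneg (fun _ _ => dist_nonneg)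

theorem edgeWeight_mono {E F : Finset (X × X)} (h : E ⊆ F) : edgeWeight E ≤ edgeWeight F :=
  Finset.sum_le_sum_of_subset_of_nonneg h (fun _ _ _ => dist_nonneg)

theorem chainLength_eq_zip_sum :
    ∀ l : List X, chainLength l = ((l.zip l.tail).map fun e => dist e.1 e.2).sum
  | [] => by simp [chainLength]
  | [a] => by simp [chainLength]
  | a :: b :: t => by
      rw [chainLength, chainLength_eq_zip_sum (b :: t)]
      simp [List.zip_cons_cons]

theorem edgeWeight_toFinset_le :
    ∀ l : List (X × X), edgeWeight l.toFinset ≤ (l.map fun e => dist e.1 e.2).sum := by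
  intro l
  induction l with
  | nil => simp [edgeWeight]
  | cons e t ih =>
    rw [List.toFinset_cons]
    by_cases he : e ∈ t.toFinset
    · rw [Finset.insert_eq_self.mpr he]
      simp only [List.map_cons, List.sum_cons]
      have : (0:ℝ) ≤ dist e.1 e.2 := dist_nonneg
      linarith
    · rw [edgeWeight, Finset.sum_insert he]
      simp only [List.map_cons, List.sum_cons]
      exact add_le_add le_rfl ih

omit [MetricSpace X] in
theorem chain'_zip : ∀ l : List X, l.Chain' (fun a b => (a, b) ∈ l.zip l.tail)
  | [] => List.isChain_nil
  | [a] => List.isChain_singleton a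
  | a :: b :: t => by
      simp only [List.Chain']
      rw [List.isChain_cons_cons]
      constructor
      · simp [List.zip_cons_cons]
      · refine (chain'_zip (b :: t)).imp ?_
        intro x y h
        simp only [List.tail_cons, List.zip_cons_cons]
        exact List.mem_cons_of_mem _ h

end Metric


section Claims

variable {X : Type*}

/-- Prefix decomposition: a path in `E` from `x` either stays in `E.erase (a,b)`,
or `x` reaches `a` or `b` in `E.erase (a,b)`. -/
theorem claim_prefix [DecidableEq (X × X)] (E : Finset (X × X)) (a b : X) :
    ∀ (p : List X) (x v : X), IsPathIn (↑E) p x v →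
      Reach (↑(E.erase (a, b))) x v ∨ Reach (↑(E.erase (a, b))) x a ∨
        Reach (↑(E.erase (a, b))) x b := by
  intro p
  induction p with
  | nil => intro x v h; exact absurd rfl h.1
  | cons y t ih =>
    intro x v h
    obtain ⟨-, hh, hl, hc⟩ := h
    obtain rfl : y = x := by simpa using hh
    cases t with
    | nil =>
      obtain rfl : y = v := by simpa using hl
      exact Or.inl (Reach.refl _ _)
    | cons z t' =>
      have hrel : (y, z) ∈ E ∨ (z, y) ∈ E := by
        have := (List.isChain_cons_cons.mp hc).1
        simpa using this
      have hpath : IsPathIn (↑E) (z :: t') z v := by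
        refine ⟨by simp, by simp, ?_, (List.isChain_cons_cons.mp hc).2⟩
        rw [← hl, List.getLast?_cons_cons]
      by_cases hE' : (y, z) ∈ E.erase (a, b) ∨ (z, y) ∈ E.erase (a, b)
      · have hr : Reach (↑(E.erase (a, b))) y z := reach_of_edgeRel (by
          rcases hE' with h' | h'
          · exact Or.inl (Finset.mem_coe.mpr h')
          · exact Or.inr (Finset.mem_coe.mpr h'))
        rcases ih z v hpath with h' | h' | h'
        · exact Or.inl (hr.trans h')
        · exact Or.inr (Or.inl (hr.trans h'))
        · exact Or.inr (Or.inr (hr.trans h'))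
      · push_neg at hE'
        have : y = a ∨ y = b := by
          rcases hrel with h' | h'
          · have := hE'.1
            rw [Finset.mem_erase] at this
            have : (y, z) = (a, b) := by tauto
            exact Or.inl (congrArg Prod.fst this)
          · have := hE'.2
            rw [Finset.mem_erase] at this
            have : (z, y) = (a, b) := by tauto
            exact Or.inr (congrArg Prod.snd this)
        rcases this with rfl | rfl
        · exact Or.inr (Or.inl (Reach.refl _ _))
        · exact Or.inr (Or.inr (Reach.refl _ _))

/-- Suffix decomposition: a path in `E` from `x` to `v` gives reachability of `v`
in `E.erase (a,b)` from `x`, `a`, or `b`. -/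
theorem claim_suffix [DecidableEq (X × X)] (E : Finset (X × X)) (a b : X) :
    ∀ (p : List X) (x v : X), IsPathIn (↑E) p x v →
      Reach (↑(E.erase (a, b))) x v ∨ Reach (↑(E.erase (a, b))) a v ∨
        Reach (↑(E.erase (a, b))) b v := by
  intro p
  induction p with
  | nil => intro x v h; exact absurd rfl h.1
  | cons y t ih =>
    intro x v h
    obtain ⟨-, hh, hl, hc⟩ := h
    obtain rfl : y = x := by simpa using hh
    cases t with
    | nil =>
      obtain rfl : y = v := by simpa using hl
      exact Or.inl (Reach.refl _ _)
    | cons z t' =>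
      have hrel : (y, z) ∈ E ∨ (z, y) ∈ E := by
        have := (List.isChain_cons_cons.mp hc).1
        simpa using this
      have hpath : IsPathIn (↑E) (z :: t') z v := by
        refine ⟨by simp, by simp, ?_, (List.isChain_cons_cons.mp hc).2⟩
        rw [← hl, List.getLast?_cons_cons]
      by_cases hE' : (y, z) ∈ E.erase (a, b) ∨ (z, y) ∈ E.erase (a, b)
      · have hr : Reach (↑(E.erase (a, b))) y z := reach_of_edgeRel (by
          rcases hE' with h' | h'
          · exact Or.inl (Finset.mem_coe.mpr h')
          · exact Or.inr (Finset.mem_coe.mpr h'))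
        rcases ih z v hpath with h' | h' | h'
        · exact Or.inl (hr.trans h')
        · exact Or.inr (Or.inl h')
        · exact Or.inr (Or.inr h')
      · push_neg at hE'
        have hz : z = a ∨ z = b := by
          rcases hrel with h' | h'
          · have := hE'.1
            rw [Finset.mem_erase] at this
            have : (y, z) = (a, b) := by tauto
            exact Or.inr (congrArg Prod.snd this)
          · have := hE'.2
            rw [Finset.mem_erase] at this
            have : (z, y) = (a, b) := by tauto
            exact Or.inl (congrArg Prod.fst this)
        rcases ih z v hpath with h' | h' | h'
        · rcases hz with rfl | rfl
          · exact Or.inr (Or.inl h')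
          · exact Or.inr (Or.inr h')
        · exact Or.inr (Or.inl h')
        · exact Or.inr (Or.inr h')

/-- A path within `E'` from `u` only uses edges whose endpoints are reachable from `u`. -/
theorem reach_filter (E' : Finset (X × X)) (u : X)
    [DecidablePred fun f : X × X => Reach (↑E') u f.1] :
    ∀ v, Reach (↑E') u v →
      Reach (↑(E'.filter fun f => Reach (↑E') u f.1)) u v := by
  intro v ⟨p, hne, hh, hl, hc⟩
  obtain ⟨p₀, rfl⟩ := exists_cons_of_head? hh
  have hmem : ∀ x ∈ u :: p₀, Reach (↑E') u x := reach_of_chain p₀ u hc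
  refine ⟨u :: p₀, hne, hh, hl, ?_⟩
  refine chain'_mono_mem _ ?_ hc
  intro c hcm d hdm hrel
  rcases hrel with h' | h'
  · exact Or.inl (by
      simp only [Finset.coe_filter, Set.mem_setOf_eq]
      exact ⟨h', hmem c hcm⟩)
  · exact Or.inr (by
      simp only [Finset.coe_filter, Set.mem_setOf_eq]
      exact ⟨h', hmem d hdm⟩)

/-- A path within `E'` from `b`, where `b` is not reachable from `u`, only uses
edges whose endpoints are not reachable from `u`. -/
theorem reach_filter_not (E' : Finset (X × X)) (u b : X) (hub : ¬ Reach (↑E') u b)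
    [DecidablePred fun f : X × X => Reach (↑E') u f.1] :
    ∀ v, Reach (↑E') b v →
      Reach (↑(E'.filter fun f => ¬ Reach (↑E') u f.1)) b v := by
  intro v ⟨p, hne, hh, hl, hc⟩
  obtain ⟨p₀, rfl⟩ := exists_cons_of_head? hh
  have hmem : ∀ x ∈ b :: p₀, Reach (↑E') b x := reach_of_chain p₀ b hc
  have hnot : ∀ x ∈ b :: p₀, ¬ Reach (↑E') u x := by
    intro x hx hux
    exact hub (hux.trans (hmem x hx).symm)
  refine ⟨b :: p₀, hne, hh, hl, ?_⟩
  refine chain'_mono_mem _ ?_ hc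
  intro c hcm d hdm hrel
  rcases hrel with h' | h'
  · exact Or.inl (by
      simp only [Finset.coe_filter, Set.mem_setOf_eq]
      exact ⟨h', hnot c hcm⟩)
  · exact Or.inr (by
      simp only [Finset.coe_filter, Set.mem_setOf_eq]
      exact ⟨h', hnot d hdm⟩)

end Claims


section Walk

variable {X : Type*} [MetricSpace X]

/-- A closed walk at `u` visiting everything reachable from `u` in `E`, of length
at most twice the weight of `E`. -/
def GoodWalk (E : Finset (X × X)) (u : X) (p : List X) : Prop :=
  p.head? = some u ∧ p.getLast? = some u ∧ (∀ v, Reach (↑E) u v → v ∈ p) ∧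
    chainLength p ≤ 2 * edgeWeight E

theorem splice {E E1 E2 : Finset (X × X)} {a b u : X} {p1 p2 : List X}
    (h1 : GoodWalk E1 u p1) (h2 : GoodWalk E2 b p2)
    (hcov : ∀ v, Reach (↑E) u v → Reach (↑E1) u v ∨ Reach (↑E2) b v)
    (hra : Reach (↑E1) u a)
    (harith : edgeWeight E1 + edgeWeight E2 + dist a b ≤ edgeWeight E) :
    ∃ p, GoodWalk E u p := by
  obtain ⟨h1h, h1l, h1cov, h1len⟩ := h1
  obtain ⟨h2h, h2l, h2cov, h2len⟩ := h2
  have ha1 : a ∈ p1 := h1cov a hra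
  obtain ⟨s, t, rfl⟩ := List.append_of_mem ha1
  obtain ⟨r, rfl⟩ := exists_cons_of_head? h2h
  refine ⟨s ++ a :: ((b :: r) ++ a :: t), ?_, ?_, ?_, ?_⟩
  · cases s with
    | nil => simpa using h1h
    | cons c s' => simpa using h1h
  · rw [show s ++ a :: ((b :: r) ++ a :: t) = (s ++ a :: (b :: r)) ++ a :: t by simp]
    rw [List.getLast?_append_cons]
    rw [List.getLast?_append_cons] at h1l
    exact h1l
  · intro v hv
    rcases hcov v hv with h' | h'
    · have := h1cov v h'
      simp only [List.mem_append, List.mem_cons] at this ⊢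
      tauto
    · have := h2cov v h'
      simp only [List.mem_append, List.mem_cons] at this ⊢
      tauto
  · have e1 : chainLength (s ++ a :: ((b :: r) ++ a :: t))
        = chainLength (s ++ [a]) + chainLength (a :: ((b :: r) ++ a :: t)) :=
      chainLength_append_cons s a _
    have e2 : chainLength (a :: ((b :: r) ++ a :: t))
        = dist a b + chainLength ((b :: r) ++ a :: t) := by
      rw [show a :: ((b :: r) ++ a :: t) = a :: b :: (r ++ a :: t) by simp]
      rw [chainLength_cons_cons]
      simp
    have e3 : chainLength ((b :: r) ++ a :: t)
        = chainLength ((b :: r) ++ [a]) + chainLength (a :: t) :=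
      chainLength_append_cons (b :: r) a t
    have e4 : chainLength ((b :: r) ++ [a]) = chainLength (b :: r) + dist b a :=
      chainLength_concat (b :: r) b a h2l
    have e5 : chainLength (s ++ a :: t) = chainLength (s ++ [a]) + chainLength (a :: t) :=
      chainLength_append_cons s a t
    rw [e1, e2, e3, e4]
    have hd : dist b a = dist a b := dist_comm b a
    have : chainLength (s ++ [a]) + chainLength (a :: t) ≤ 2 * edgeWeight E1 := by
      rw [← e5]; exact h1len
    linarith


theorem main_split {n : ℕ}
    (ih : ∀ F : Finset (X × X), F.card ≤ n → ∀ w : X, ∃ p, GoodWalk F w p)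
    {E E' : Finset (X × X)} {a b u : X}
    (hE'card : E'.card ≤ n)
    (hW : edgeWeight E' + dist a b = edgeWeight E)
    (hclaim : ∀ v, Reach (↑E) u v →
      Reach (↑E') u v ∨ Reach (↑E') a v ∨ Reach (↑E') b v)
    (hua : Reach (↑E') u a)
    (hub : ¬ Reach (↑E') u b) :
    ∃ p, GoodWalk E u p := by
  classical
  set E1 := E'.filter (fun f => Reach (↑E') u f.1) with hE1
  set E2 := E'.filter (fun f => ¬ Reach (↑E') u f.1) with hE2
  have hE1card : E1.card ≤ n :=
    le_trans (Finset.card_le_card (Finset.filter_subset _ _)) hE'card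
  have hE2card : E2.card ≤ n :=
    le_trans (Finset.card_le_card (Finset.filter_subset _ _)) hE'card
  obtain ⟨p1, hp1⟩ := ih E1 hE1card u
  obtain ⟨p2, hp2⟩ := ih E2 hE2card b
  refine splice hp1 hp2 ?_ (reach_filter E' u a hua) ?_
  · intro v hv
    rcases hclaim v hv with h' | h' | h'
    · exact Or.inl (reach_filter E' u v h')
    · exact Or.inl (reach_filter E' u v (hua.trans h'))
    · exact Or.inr (reach_filter_not E' u b hub v h')
  · have : edgeWeight E1 + edgeWeight E2 = edgeWeight E' := by
      rw [edgeWeight, edgeWeight, edgeWeight, hE1, hE2]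
      exact Finset.sum_filter_add_sum_filter_not E' _ _
    linarith

theorem walk_lemma :
    ∀ (n : ℕ) (E : Finset (X × X)), E.card ≤ n → ∀ u : X, ∃ p, GoodWalk E u p := by
  intro n
  induction n with
  | zero =>
    intro E hE u
    have hE0 : E = ∅ := Finset.card_eq_zero.mp (Nat.le_zero.mp hE)
    subst hE0
    refine ⟨[u], rfl, rfl, ?_, ?_⟩
    · rintro v ⟨p, hne, hh, hl, hc⟩
      obtain ⟨p₀, rfl⟩ := exists_cons_of_head? hh
      cases p₀ with
      | nil =>
        obtain rfl : u = v := by simpa using hl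
        simp
      | cons z t =>
        have := (List.isChain_cons_cons.mp hc).1
        simp at this
    · simp [chainLength, edgeWeight]
  | succ n ih =>
    intro E hE u
    by_cases hcard : E.card ≤ n
    · exact ih E hcard u
    have hne : E.Nonempty := by
      rw [← Finset.card_pos]; omega
    obtain ⟨e, he⟩ := hne
    obtain ⟨a, b⟩ := e
    set E' := E.erase (a, b) with hE'def
    have hE'card : E'.card ≤ n := by
      have hcc : E'.card = E.card - 1 := by
        rw [hE'def]; exact Finset.card_erase_of_mem he
      omega
    have hsub : (↑E' : Set (X × X)) ⊆ (↑E : Set (X × X)) := by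
      intro x hx
      exact Finset.mem_coe.mpr (Finset.mem_of_mem_erase (Finset.mem_coe.mp hx))
    have hW : edgeWeight E' + dist a b = edgeWeight E := by
      have := Finset.sum_erase_add E (fun e => dist e.1 e.2) he
      simpa [edgeWeight] using this
    by_cases hua : Reach (↑E') u a
    · by_cases hub : Reach (↑E') u b
      · -- both endpoints reachable: E' suffices
        obtain ⟨p, hp1, hp2, hp3, hp4⟩ := ih E' hE'card u
        refine ⟨p, hp1, hp2, ?_, ?_⟩
        · intro v hv
          obtain ⟨q, hq⟩ := hv
          rcases claim_suffix E a b q u v hq with h' | h' | h'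
          · exact hp3 v h'
          · exact hp3 v (hua.trans h')
          · exact hp3 v (hub.trans h')
        · refine le_trans hp4 ?_
          have : edgeWeight E' ≤ edgeWeight E := by
            have := dist_nonneg (x := a) (y := b); linarith
          linarith
      · -- a reachable, b not: split E'
        refine main_split ih hE'card hW ?_ hua hub
        intro v hv
        obtain ⟨q, hq⟩ := hv
        exact claim_suffix E a b q u v hq
    · by_cases hub : Reach (↑E') u b
      · -- b reachable, a not: symmetric
        have hW' : edgeWeight E' + dist b a = edgeWeight E := by
          rw [dist_comm]; exact hW
        refine main_split ih hE'card hW' ?_ hub hua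
        intro v hv
        obtain ⟨q, hq⟩ := hv
        rcases claim_suffix E a b q u v hq with h' | h' | h'
        · exact Or.inl h'
        · exact Or.inr (Or.inr h')
        · exact Or.inr (Or.inl h')
      · -- neither: E' suffices via prefix claim
        obtain ⟨p, hp1, hp2, hp3, hp4⟩ := ih E' hE'card u
        refine ⟨p, hp1, hp2, ?_, ?_⟩
        · intro v hv
          obtain ⟨q, hq⟩ := hv
          rcases claim_prefix E a b q u v hq with h' | h' | h'
          · exact hp3 v h'
          · exact absurd h' hua
          · exact absurd h' hub
        · refine le_trans hp4 ?_
          have : edgeWeight E' ≤ edgeWeight E := by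
            have := dist_nonneg (x := a) (y := b); linarith
          linarith

end Walk

end SteinerAux

/-- **Steiner tree versus MST.** Let `G` be a connected weighted graph on a finite
point set `V` in a metric space (edge weights equal to distances), `N ⊆ V`, and
let `T` be a minimum-weight Steiner tree in `G` connecting the required vertices
`N` (possibly using other vertices of `G` as optional Steiner points). Then the
weight of a minimum spanning tree of the complete metric graph on `N` is at most
twice the weight of `T`. -/
theorem mst_le_two_steiner {X : Type*} [MetricSpace X]
    (V : Finset X) (Eg : Finset (X × X))
    (hEg : ∀ e ∈ Eg, e.1 ∈ V ∧ e.2 ∈ V)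
    (hconn : ConnectsIn (↑Eg : Set (X × X)) (↑V : Set X))
    (N : Finset X) (hN : N ⊆ V)
    (T : Finset (X × X)) (hTsub : T ⊆ Eg)
    (hTconn : ConnectsIn (↑T : Set (X × X)) (↑N : Set X))
    (hTmin : ∀ T' ⊆ Eg, ConnectsIn (↑T' : Set (X × X)) (↑N : Set X) → edgeWeight T ≤ edgeWeight T') :
    mstWeight N ≤ 2 * edgeWeight T := by
  classical
  have hbdd : BddBelow { c | ∃ E : Finset (X × X), (∀ e ∈ E, e.1 ∈ N ∧ e.2 ∈ N) ∧
      ConnectsIn (↑E : Set (X × X)) (↑N : Set X) ∧ c = edgeWeight E } := by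
    refine ⟨0, ?_⟩
    rintro c ⟨E, -, -, rfl⟩
    exact SteinerAux.edgeWeight_nonneg E
  have hT0 : 0 ≤ 2 * edgeWeight T := by
    have := SteinerAux.edgeWeight_nonneg T; linarith
  rcases N.eq_empty_or_nonempty with rfl | ⟨u, hu⟩
  · have hmem : (0:ℝ) ∈ { c | ∃ E : Finset (X × X), (∀ e ∈ E, e.1 ∈ (∅ : Finset X) ∧
        e.2 ∈ (∅ : Finset X)) ∧
        ConnectsIn (↑E : Set (X × X)) (↑(∅ : Finset X) : Set X) ∧ c = edgeWeight E } := by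
      refine ⟨∅, by simp, ?_, by simp [edgeWeight]⟩
      intro x hx
      simp at hx
    exact le_trans (csInf_le hbdd hmem) hT0
  · obtain ⟨p, hph, hpl, hpcov, hplen⟩ := SteinerAux.walk_lemma T.card T le_rfl u
    set p' := p.filter (fun x => x ∈ N) with hp'def
    have hNp' : ∀ v ∈ N, v ∈ p' := by
      intro v hv
      refine List.mem_filter.mpr ⟨?_, by simp [hv]⟩
      exact hpcov v (hTconn u (by exact_mod_cast hu) v (by exact_mod_cast hv))
    have hp'N : ∀ x ∈ p', x ∈ N := by
      intro x hx
      have := (List.mem_filter.mp hx).2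
      simpa using this
    set F := (p'.zip p'.tail).toFinset with hFdef
    have hF1 : ∀ e ∈ F, e.1 ∈ N ∧ e.2 ∈ N := by
      rintro ⟨c, d⟩ he
      have hmem := List.mem_toFinset.mp he
      obtain ⟨hc, hd⟩ := List.of_mem_zip hmem
      exact ⟨hp'N c hc, hp'N d (List.mem_of_mem_tail hd)⟩
    have hchain : p'.Chain' (SteinerAux.edgeRel (↑F : Set (X × X))) := by
      refine (SteinerAux.chain'_zip p').imp ?_
      intro x y h
      exact Or.inl (Finset.mem_coe.mpr (List.mem_toFinset.mpr h))
    have hF2 : ConnectsIn (↑F : Set (X × X)) (↑N : Set X) := by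
      intro x hx y hy
      have hxp : x ∈ p' := hNp' x (by exact_mod_cast hx)
      have hyp : y ∈ p' := hNp' y (by exact_mod_cast hy)
      obtain ⟨h₀, t₀, hpp⟩ : ∃ h₀ t₀, p' = h₀ :: t₀ := by
        cases hpp : p' with
        | nil => rw [hpp] at hxp; simp at hxp
        | cons h₀ t₀ => exact ⟨h₀, t₀, rfl⟩
      rw [hpp] at hchain hxp hyp
      have r1 := SteinerAux.reach_of_chain t₀ h₀ hchain x hxp
      have r2 := SteinerAux.reach_of_chain t₀ h₀ hchain y hyp
      exact r1.symm.trans r2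
    have hw : edgeWeight F ≤ 2 * edgeWeight T := by
      have h1 : edgeWeight F ≤ ((p'.zip p'.tail).map fun e => dist e.1 e.2).sum :=
        SteinerAux.edgeWeight_toFinset_le _
      have h2 : ((p'.zip p'.tail).map fun e => dist e.1 e.2).sum = chainLength p' :=
        (SteinerAux.chainLength_eq_zip_sum p').symm
      have h3 : chainLength p' ≤ chainLength p :=
        SteinerAux.chainLength_mono (List.filter_sublist (l := p))
      linarith
    have hmem : edgeWeight F ∈ { c | ∃ E : Finset (X × X), (∀ e ∈ E, e.1 ∈ N ∧ e.2 ∈ N) ∧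
        ConnectsIn (↑E : Set (X × X)) (↑N : Set X) ∧ c = edgeWeight E } :=
      ⟨F, hF1, hF2, rfl⟩
    exact le_trans (csInf_le hbdd hmem) hw


end
end

section
/- Suppose ε' = ε/36 with 0 < ε ≤ 1, and suppose points x, y, x', y', u, v in a metric space satisfy: ‖xy‖ > 1/(1+ε'), ‖ux‖ ≤ ε', ‖vy‖ ≤ ε', ‖ux'‖ ≤ 2ε', ‖vy'‖ ≤ 2ε'. Suppose further there are paths P_{xx'} of length at most (1+ε')‖xx'‖ between x and x' and P_{yy'} of length at most (1+ε')‖yy'‖ between y and y'. Then the path P = P_{xx'} · x'y' · P_{y'y} has length at most (1+ε)‖xy‖. -/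
noncomputable section

lemma chainLength_append_aux {X : Type*} [PseudoMetricSpace X] :
    ∀ (l : List X) (a b : X) (m : List X),
      chainLength (l ++ [a] ++ b :: m) =
        chainLength (l ++ [a]) + dist a b + chainLength (b :: m) := by
  intro l
  induction l with
  | nil => intro a b m; simp [chainLength]
  | cons c l ih =>
    intro a b m
    cases l with
    | nil => simp [chainLength]; ring
    | cons d l' =>
      have h := ih a b m
      simp only [List.cons_append, List.append_eq, chainLength] at h ⊢
      rw [h]; ring

/-- **Key stretch inequality for the replacement step.** With `ε' = ε/36`,
`0 < ε ≤ 1`, points satisfying `‖xy‖ > 1/(1+ε')`, `‖ux‖ ≤ ε'`, `‖vy‖ ≤ ε'`,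
`‖ux'‖ ≤ 2ε'`, `‖vy'‖ ≤ 2ε'`, a path `p₁` from `x` to `x'` of length at most
`(1+ε')‖xx'‖` and a path `p₂` from `y'` to `y` of length at most `(1+ε')‖yy'‖`,
the concatenated path `P = p₁ · x'y' · p₂` has length at most `(1+ε)‖xy‖`. -/
theorem replacement_stretch {X : Type*} [MetricSpace X]
    {ε ε' : ℝ} (hε0 : 0 < ε) (hε1 : ε ≤ 1) (hε' : ε' = ε / 36)
    (x y x' y' u v : X)
    (hxy : 1 / (1 + ε') < dist x y)
    (hux : dist u x ≤ ε') (hvy : dist v y ≤ ε')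
    (hux' : dist u x' ≤ 2 * ε') (hvy' : dist v y' ≤ 2 * ε')
    (p₁ p₂ : List X)
    (hp₁ne : p₁ ≠ []) (hp₁h : p₁.head? = some x) (hp₁l : p₁.getLast? = some x')
    (hp₁len : chainLength p₁ ≤ (1 + ε') * dist x x')
    (hp₂ne : p₂ ≠ []) (hp₂h : p₂.head? = some y') (hp₂l : p₂.getLast? = some y)
    (hp₂len : chainLength p₂ ≤ (1 + ε') * dist y y') :
    chainLength (p₁ ++ p₂) ≤ (1 + ε) * dist x y := by
  have hε'pos : 0 < ε' := by rw [hε']; linarith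
  have hε'le : ε' ≤ 1 / 36 := by rw [hε']; linarith
  -- decompose p₁ = l ++ [x'], p₂ = y' :: m
  have hp₁ : p₁ = p₁.dropLast ++ [x'] := by
    have := List.dropLast_append_getLast hp₁ne
    rw [List.getLast?_eq_getLast hp₁ne] at hp₁l
    rw [Option.some_inj] at hp₁l
    rw [hp₁l] at this
    exact this.symm
  obtain ⟨m, hp₂⟩ : ∃ m, p₂ = y' :: m := by
    cases p₂ with
    | nil => exact absurd rfl hp₂ne
    | cons a m =>
      simp only [List.head?_cons, Option.some_inj] at hp₂h
      exact ⟨m, by rw [hp₂h]⟩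
  have key : chainLength (p₁ ++ p₂) =
      chainLength p₁ + dist x' y' + chainLength p₂ := by
    conv_lhs => rw [hp₁, hp₂]
    rw [chainLength_append_aux, ← hp₁, ← hp₂]
  -- metric bounds
  have hxx' : dist x x' ≤ 3 * ε' := by
    have := dist_triangle x u x'
    rw [dist_comm u x] at hux
    linarith
  have hyy' : dist y y' ≤ 3 * ε' := by
    have := dist_triangle y v y'
    have h' : dist v y' ≤ 2 * ε' := hvy'
    rw [dist_comm v y] at hvy
    linarith
  have hx'y' : dist x' y' ≤ dist x y + 6 * ε' := by
    have h1 := dist_triangle x' x y'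
    have h2 := dist_triangle x y y'
    rw [dist_comm x' x] at h1
    linarith
  have hd1 : dist x x' ≥ 0 := dist_nonneg
  have hd2 : dist y y' ≥ 0 := dist_nonneg
  have hbig : dist x y > 1 / (1 + ε') := hxy
  have hε'1 : (0:ℝ) < 1 + ε' := by linarith
  -- total bound
  have hsum : chainLength (p₁ ++ p₂) ≤
      dist x y + 6 * ε' + 6 * ε' * (1 + ε') := by
    rw [key]
    have b1 : chainLength p₁ ≤ (1 + ε') * (3 * ε') :=
      le_trans hp₁len (by nlinarith)
    have b2 : chainLength p₂ ≤ (1 + ε') * (3 * ε') :=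
      le_trans hp₂len (by nlinarith)
    nlinarith
  have hfinal : 6 * ε' + 6 * ε' * (1 + ε') ≤ ε * dist x y := by
    have h1 : 6 * ε' * (2 + ε') * (1 + ε') ≤ ε := by
      rw [hε']
      nlinarith [mul_nonneg hε0.le hε0.le, mul_nonneg (mul_nonneg hε0.le hε0.le) hε0.le,
        mul_le_one₀ hε1 hε0.le hε1]
    have h2 : ε / (1 + ε') ≤ ε * dist x y := by
      have := mul_le_mul_of_nonneg_left hbig.le hε0.le
      calc ε / (1 + ε') = ε * (1 / (1 + ε')) := by ring
        _ ≤ ε * dist x y := this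
    calc 6 * ε' + 6 * ε' * (1 + ε') = 6 * ε' * (2 + ε') := by ring
      _ ≤ ε / (1 + ε') := by rw [le_div_iff₀ hε'1]; linarith [h1]
      _ ≤ ε * dist x y := h2
  linarith

end
end

section
/- Let MN and PQ be two segments in the Euclidean plane, both edges of a greedy t-spanner, making angle at most θ with each other where θ < (t−1)/(2(t+1)), both crossing an arbitrary segment AB, and both of length at least (3t(t+1)/(t−1))·|AB|. If the projections of P and Q onto a baseline direction both lie between the projections of M and N, then t·|MP| + |PQ| + t·|QN| ≤ t·|MN|, contradicting the greedy construction; hence MN and PQ are endpoint-ordered (neither projection interval contains the other). -/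
open Classical RealInnerProductSpace

noncomputable section

/-- The two-dimensional Euclidean plane. -/
abbrev E2 := EuclideanSpace ℝ (Fin 2)


noncomputable section

private lemma e2_inner (x y : E2) : ⟪x, y⟫ = x 0 * y 0 + x 1 * y 1 := by
  simp [PiLp.inner_apply, Fin.sum_univ_two, RCLike.inner_apply]; ring

private lemma e2_sub (z w : E2) (i : Fin 2) : (z - w) i = z i - w i := rfl
private lemma e2_add (z w : E2) (i : Fin 2) : (z + w) i = z i + w i := rfl
private lemma e2_smul (c : ℝ) (z : E2) (i : Fin 2) : (c • z) i = c * z i := rfl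

private lemma e2_dist_sq (z w : E2) : dist z w ^ 2 = (z 0 - w 0)^2 + (z 1 - w 1)^2 := by
  rw [dist_eq_norm, ← real_inner_self_eq_norm_sq, e2_inner, e2_sub, e2_sub]; ring

private def Fc (M : E2) (a b : ℝ) (z : E2) : ℝ := (z 0 - M 0) * a + (z 1 - M 1) * b
private def Gc (M : E2) (a b : ℝ) (z : E2) : ℝ := (z 1 - M 1) * a - (z 0 - M 0) * b

private lemma coord_dist (M : E2) {a b : ℝ} (hab : a^2 + b^2 = 1) (z w : E2) :
    dist z w ^ 2 = (Fc M a b z - Fc M a b w)^2 + (Gc M a b z - Gc M a b w)^2 := by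
  rw [e2_dist_sq]; unfold Fc Gc
  linear_combination (-(z 0 - w 0)^2 - (z 1 - w 1)^2) * hab

private lemma coord_dist_le (M : E2) {a b : ℝ} (hab : a^2 + b^2 = 1) (z w : E2) :
    dist z w ≤ |Fc M a b z - Fc M a b w| + |Gc M a b z - Gc M a b w| := by
  have h := coord_dist M hab z w
  nlinarith [abs_nonneg (Fc M a b z - Fc M a b w), abs_nonneg (Gc M a b z - Gc M a b w),
    sq_abs (Fc M a b z - Fc M a b w), sq_abs (Gc M a b z - Gc M a b w), dist_nonneg (x := z) (y := w),
    mul_nonneg (abs_nonneg (Fc M a b z - Fc M a b w)) (abs_nonneg (Gc M a b z - Gc M a b w))]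

private lemma coord_G_le (M : E2) {a b : ℝ} (hab : a^2 + b^2 = 1) (z w : E2) :
    |Gc M a b z - Gc M a b w| ≤ dist z w := by
  have h := coord_dist M hab z w
  nlinarith [abs_nonneg (Gc M a b z - Gc M a b w), sq_abs (Gc M a b z - Gc M a b w),
    dist_nonneg (x := z) (y := w), sq_nonneg (Fc M a b z - Fc M a b w)]

private lemma seg_dist_le {X Y A B : E2} (hX : X ∈ segment ℝ A B) (hY : Y ∈ segment ℝ A B) :
    dist X Y ≤ dist A B := by
  obtain ⟨a1, b1, ha1, hb1, hab1, rfl⟩ := hX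
  obtain ⟨a2, b2, ha2, hb2, hab2, rfl⟩ := hY
  have hxy : (a1 • A + b1 • B) - (a2 • A + b2 • B) = (b1 - b2) • (B - A) := by
    have e1 : a1 = 1 - b1 := by linarith
    have e2 : a2 = 1 - b2 := by linarith
    rw [e1, e2]; module
  rw [dist_eq_norm, hxy, norm_smul, Real.norm_eq_abs, dist_eq_norm']
  have h1 : |b1 - b2| ≤ 1 := by rw [abs_le]; constructor <;> linarith
  calc |b1 - b2| * ‖B - A‖ ≤ 1 * ‖B - A‖ :=
        mul_le_mul_of_nonneg_right h1 (norm_nonneg _)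
    _ = ‖B - A‖ := one_mul _


private lemma gbound {l θ fD gD c0 : ℝ} (hθ0 : 0 ≤ θ) (hθh : θ < 1/2)
    (hl0 : 0 < l) (hc0ge : 1 - θ^2/2 ≤ c0) (hc0le : c0 ≤ 1)
    (hk : l^2 = fD^2 + gD^2) (hf : fD = l * c0) : |gD| ≤ l * θ := by
  have hc0pos : 0 ≤ c0 := by nlinarith
  have hc2 : (1 - θ^2/2)^2 ≤ c0^2 :=
    pow_le_pow_left₀ (by nlinarith) hc0ge 2
  have hsq : gD^2 ≤ (l*θ)^2 := by
    have hf2 : fD^2 = (l*c0)^2 := by rw [hf]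
    nlinarith [hk, hf2, mul_le_mul_of_nonneg_left hc2 (sq_nonneg l), sq_nonneg (l*θ^2)]
  calc |gD| = Real.sqrt (gD^2) := by rw [Real.sqrt_sq_eq_abs]
    _ ≤ Real.sqrt ((l*θ)^2) := Real.sqrt_le_sqrt hsq
    _ = l*θ := Real.sqrt_sq (mul_nonneg hl0.le hθ0)

private lemma mainbound {t θ d l c0 gP gQ : ℝ} (ht : 1 < t) (hθ0 : 0 ≤ θ)
    (hθt : 2*(t+1)*θ ≤ t - 1) (hd0 : 0 ≤ d) (hl0 : 0 < l)
    (hc0ge : 1 - θ^2/2 ≤ c0) (hdl : 3*t*(t+1)*d ≤ (t-1)*l)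
    (hgsum : gP + gQ ≤ 2*d + l*θ) (hgP : 0 ≤ gP) (hgQ : 0 ≤ gQ) :
    t*(gP + gQ) + l ≤ t*(l*c0) := by
  have ht0 : (0:ℝ) < t := by linarith
  have poly : 3*(t+1)*(t*θ + 1 + t*θ^2/2) + 2*(t-1) ≤ 3*(t+1)*t := by
    nlinarith [hθt, hθ0, ht, mul_nonneg hθ0 (by linarith : 0 ≤ t - 1 - 2*(t+1)*θ),
      mul_nonneg (mul_nonneg hθ0 hθ0) (by linarith : 0 ≤ t - 1),
      sq_nonneg (t - 1 - 2*(t+1)*θ)]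
  have hA : t*l*(1 - θ^2/2) ≤ t*l*c0 :=
    mul_le_mul_of_nonneg_left hc0ge (mul_nonneg ht0.le hl0.le)
  have hB : t*(gP + gQ) ≤ t*(2*d + l*θ) :=
    mul_le_mul_of_nonneg_left hgsum ht0.le
  have hC : (3*(t+1)*(t*θ + 1 + t*θ^2/2))*l ≤ (3*(t+1)*t - 2*(t-1))*l :=
    mul_le_mul_of_nonneg_right (by linarith) hl0.le
  nlinarith [hA, hB, hC, hdl, (by linarith : (0:ℝ) < 3*(t+1))]


set_option maxHeartbeats 1000000 in
/-- **Ordering of almost-parallel long greedy edges crossing a segment.**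
Let `MN` and `PQ` be two edges of a greedy `t`-spanner in the plane making angle
at most `θ < (t−1)/(2(t+1))` with each other, both crossing a segment `AB`, and
both of length at least `(3t(t+1)/(t−1))·|AB|`. If the projections of `P` and
`Q` onto the baseline (the direction of `MN`) both lie between the projections
of `M` and `N`, then `t·|MP| + |PQ| + t·|QN| ≤ t·|MN|` — contradicting the
greedy construction; hence `MN` and `PQ` are endpoint-ordered. -/
theorem long_parallel_edges_ordered {t θ : ℝ} (ht : 1 < t)
    (hθ0 : 0 ≤ θ) (hθ : θ < (t - 1) / (2 * (t + 1)))
    (V : Finset E2) (l : List (E2 × E2))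
    (hmem : ∀ e ∈ l, e.1 ∈ V ∧ e.2 ∈ V ∧ e.1 ≠ e.2)
    (hsort : List.Pairwise (fun a b => dist a.1 a.2 ≤ dist b.1 b.2) l)
    (hcomp : ∀ P ∈ V, ∀ Q ∈ V, P ≠ Q → (P, Q) ∈ l ∨ (Q, P) ∈ l)
    (M N P Q A B : E2)
    (hMN : (M, N) ∈ naiveGreedy t l) (hPQ : (P, Q) ∈ naiveGreedy t l)
    (hne : (M, N) ≠ (P, Q))
    (hangle : InnerProductGeometry.angle (N - M) (Q - P) ≤ θ)
    (hcross1 : ∃ z : E2, z ∈ segment ℝ M N ∧ z ∈ segment ℝ A B)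
    (hcross2 : ∃ z : E2, z ∈ segment ℝ P Q ∧ z ∈ segment ℝ A B)
    (hlenMN : 3 * t * (t + 1) / (t - 1) * dist A B ≤ dist M N)
    (hlenPQ : 3 * t * (t + 1) / (t - 1) * dist A B ≤ dist P Q)
    (hprojP : ⟪P, N - M⟫ ∈ Set.uIcc (⟪M, N - M⟫ : ℝ) ⟪N, N - M⟫)
    (hprojQ : ⟪Q, N - M⟫ ∈ Set.uIcc (⟪M, N - M⟫ : ℝ) ⟪N, N - M⟫) :
    t * dist M P + dist P Q + t * dist Q N ≤ t * dist M N := by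
  have ht0 : (0:ℝ) < t := by linarith
  have hθhalf : θ < 1/2 := by
    have : (t-1)/(2*(t+1)) < 1/2 := by rw [div_lt_iff₀ (by linarith)]; linarith
    linarith
  have hθt : 2*(t+1)*θ ≤ t - 1 := by
    have := (lt_div_iff₀ (by linarith : (0:ℝ) < 2*(t+1))).mp hθ
    linarith
  have hpi : θ ≤ Real.pi := by linarith [Real.pi_gt_three]
  have hMN' : M ≠ N := by
    rintro rfl
    rw [sub_self, InnerProductGeometry.angle_zero_left] at hangle
    linarith [Real.pi_gt_three]
  have hPQ' : P ≠ Q := by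
    intro h
    rw [h, sub_self, InnerProductGeometry.angle_zero_right] at hangle
    linarith [Real.pi_gt_three]
  obtain ⟨X, hXMN, hXAB⟩ := hcross1
  obtain ⟨Y, hYPQ, hYAB⟩ := hcross2
  set d := dist A B with hdd
  set L := dist M N with hLd
  set ℓ := dist P Q with hld
  clear_value d L ℓ
  have hL0 : 0 < L := hLd ▸ dist_pos.mpr hMN'
  have hℓ0 : 0 < ℓ := hld ▸ dist_pos.mpr hPQ'
  have hd0 : 0 ≤ d := hdd ▸ dist_nonneg
  have hL2 : (N 0 - M 0)^2 + (N 1 - M 1)^2 = L^2 := by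
    have h := e2_dist_sq M N; rw [← hLd] at h; linear_combination -h
  set a : ℝ := (N 0 - M 0) / L with ha
  set b : ℝ := (N 1 - M 1) / L with hb
  clear_value a b
  have hab : a^2 + b^2 = 1 := by
    rw [ha, hb]; field_simp; linear_combination hL2
  -- basic coordinate values
  have hfM : Fc M a b M = 0 := by unfold Fc; ring
  have hgM : Gc M a b M = 0 := by unfold Gc; ring
  have hfN : Fc M a b N = L := by
    unfold Fc; rw [ha, hb]; field_simp; linear_combination hL2
  have hgN : (N 1 - M 1) * a - (N 0 - M 0) * b = 0 := by rw [ha, hb]; ring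
  -- projections
  have hmn : (⟪M, N - M⟫ : ℝ) ≤ ⟪N, N - M⟫ := by
    simp only [e2_inner, e2_sub]
    have h : (N 0*(N 0 - M 0) + N 1*(N 1 - M 1)) - (M 0*(N 0 - M 0)+M 1*(N 1 - M 1)) = L^2 := by
      linear_combination hL2
    linarith [sq_nonneg L]
  rw [Set.uIcc_of_le hmn] at hprojP hprojQ
  obtain ⟨hP1, hP2⟩ := hprojP
  obtain ⟨hQ1, hQ2⟩ := hprojQ
  simp only [e2_inner, e2_sub] at hP1 hP2 hQ1 hQ2
  have hfP0 : 0 ≤ Fc M a b P := by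
    have h : L * Fc M a b P = P 0 * (N 0 - M 0) + P 1 * (N 1 - M 1)
        - (M 0 * (N 0 - M 0) + M 1 * (N 1 - M 1)) := by
      unfold Fc; rw [ha, hb]; field_simp; ring
    have h0 : L * 0 ≤ L * Fc M a b P := by rw [mul_zero]; linarith
    exact le_of_mul_le_mul_left h0 hL0
  have hfQL : Fc M a b Q ≤ L := by
    have h : L * Fc M a b Q = Q 0 * (N 0 - M 0) + Q 1 * (N 1 - M 1)
        - (M 0 * (N 0 - M 0) + M 1 * (N 1 - M 1)) := by
      unfold Fc; rw [ha, hb]; field_simp; ring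
    have h2 : N 0 * (N 0 - M 0) + N 1 * (N 1 - M 1)
        - (M 0 * (N 0 - M 0) + M 1 * (N 1 - M 1)) = L^2 := by linear_combination hL2
    have h0 : L * Fc M a b Q ≤ L * L := by nlinarith [hQ2]
    exact le_of_mul_le_mul_left h0 hL0
  -- angle facts
  set c0 : ℝ := Real.cos (InnerProductGeometry.angle (N - M) (Q - P)) with hc0d
  clear_value c0
  have hc0le : c0 ≤ 1 := hc0d ▸ Real.cos_le_one _
  have hc0ge : 1 - θ^2/2 ≤ c0 := by
    have h1 : Real.cos θ ≤ c0 := by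
      rw [hc0d]
      exact Real.cos_le_cos_of_nonneg_of_le_pi
        (InnerProductGeometry.angle_nonneg _ _) hpi hangle
    linarith [Real.one_sub_sq_div_two_le_cos (x := θ)]
  have hNM : ‖N - M‖ = L := by rw [hLd, dist_eq_norm']
  have hQP : ‖Q - P‖ = ℓ := by rw [hld, dist_eq_norm']
  have hiQP : (N 0 - M 0) * (Q 0 - P 0) + (N 1 - M 1) * (Q 1 - P 1) = L * ℓ * c0 := by
    have h := InnerProductGeometry.cos_angle (N - M) (Q - P)
    rw [hNM, hQP, ← hc0d] at h
    simp only [e2_inner, e2_sub] at h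
    field_simp at h
    linarith [h]
  have hfQP : Fc M a b Q - Fc M a b P = ℓ * c0 := by
    unfold Fc; rw [ha, hb]; field_simp; linear_combination hiQP
  -- perpendicular spread of PQ
  have hgQP : |Gc M a b Q - Gc M a b P| ≤ ℓ * θ := by
    have hk := coord_dist M hab Q P
    rw [dist_comm, ← hld] at hk
    exact gbound hθ0 hθhalf hℓ0 hc0ge hc0le (by linarith [hk]) hfQP
  -- crossing points
  have hgX : Gc M a b X = 0 := by
    obtain ⟨r1, r2, hr1, hr2, hr12, hXeq⟩ := hXMN
    rw [← hXeq]; unfold Gc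
    simp only [e2_add, e2_smul]
    linear_combination r2 * hgN + (M 1 * a - M 0 * b) * hr12
  obtain ⟨s1, s2, hs1, hs2, hs12, hYeq⟩ := hYPQ
  have hgY : Gc M a b Y = s1 * Gc M a b P + s2 * Gc M a b Q := by
    rw [← hYeq]; unfold Gc
    simp only [e2_add, e2_smul]
    linear_combination (M 1 * a - M 0 * b) * hs12
  have hgYd : |Gc M a b Y| ≤ d := by
    have h1 := coord_G_le M hab Y X
    rw [hgX, sub_zero] at h1
    have h2 : dist Y X ≤ d := by rw [hdd]; exact seg_dist_le hYAB hXAB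
    exact h1.trans h2
  -- bounds on |gP| and |gQ|
  have egP : Gc M a b P = Gc M a b Y - s2 * (Gc M a b Q - Gc M a b P) := by
    linear_combination -hgY - (Gc M a b P) * hs12
  have egQ : Gc M a b Q = Gc M a b Y + s1 * (Gc M a b Q - Gc M a b P) := by
    linear_combination -hgY - (Gc M a b Q) * hs12
  have hgP : |Gc M a b P| ≤ d + s2 * (ℓ * θ) := by
    rw [egP]
    calc |Gc M a b Y - s2 * (Gc M a b Q - Gc M a b P)|
        ≤ |Gc M a b Y| + |s2 * (Gc M a b Q - Gc M a b P)| := abs_sub _ _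
      _ = |Gc M a b Y| + s2 * |Gc M a b Q - Gc M a b P| := by
          rw [abs_mul, abs_of_nonneg hs2]
      _ ≤ d + s2 * (ℓ * θ) := by
          gcongr
  have hgQ : |Gc M a b Q| ≤ d + s1 * (ℓ * θ) := by
    rw [egQ]
    calc |Gc M a b Y + s1 * (Gc M a b Q - Gc M a b P)|
        ≤ |Gc M a b Y| + |s1 * (Gc M a b Q - Gc M a b P)| := abs_add_le _ _
      _ = |Gc M a b Y| + s1 * |Gc M a b Q - Gc M a b P| := by
          rw [abs_mul, abs_of_nonneg hs1]
      _ ≤ d + s1 * (ℓ * θ) := by gcongr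
  have hgsum : |Gc M a b P| + |Gc M a b Q| ≤ 2*d + ℓ*θ := by
    have : s1 * (ℓ*θ) + s2 * (ℓ*θ) = ℓ*θ := by
      rw [← add_mul, hs12, one_mul]
    linarith
  -- distance bounds
  have h1 : dist M P ≤ Fc M a b P + |Gc M a b P| := by
    have h := coord_dist_le M hab M P
    rw [hfM, hgM, zero_sub, zero_sub, abs_neg, abs_neg, abs_of_nonneg hfP0] at h
    exact h
  have h2 : dist Q N ≤ (L - Fc M a b Q) + |Gc M a b Q| := by
    have h := coord_dist_le M hab Q N
    rw [hfN, show Gc M a b N = 0 from by unfold Gc; linear_combination hgN, sub_zero,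
      abs_of_nonpos (by linarith : Fc M a b Q - L ≤ 0)] at h
    linarith
  -- length condition
  have hdℓ : 3*t*(t+1)*d ≤ (t-1)*ℓ := by
    have h := hlenPQ
    rw [div_mul_eq_mul_div, div_le_iff₀ (by linarith : (0:ℝ) < t - 1)] at h
    linarith
  -- main inequality
  have main : t*(|Gc M a b P| + |Gc M a b Q|) + ℓ ≤ t*(ℓ*c0) :=
    mainbound ht hθ0 hθt hd0 hℓ0 hc0ge hdℓ hgsum (abs_nonneg _) (abs_nonneg _)
  calc t * dist M P + ℓ + t * dist Q N
      ≤ t*(Fc M a b P + |Gc M a b P|) + ℓ + t*((L - Fc M a b Q) + |Gc M a b Q|) := by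
        gcongr
    _ ≤ t * L := by
        have hfQPt : t*(Fc M a b Q - Fc M a b P) = t*(ℓ*c0) := by rw [hfQP]
        linarith [main, hfQPt]

end
end
end
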